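/- Let n > k ≥ 1. If there exists a k-prolific permutation of size n, then n ≥ ⌈k²/2 + 2k + 1⌉; explicitly, 2n ≥ k² + 4k + 3 when k is odd, and 2n ≥ k² + 4k + 2 when k is even. -/

import Mathlib

open Finset

namespace Prolific

/-- The L¹ ("taxicab") distance between the `i`th and `j`th entries of `σ`. -/
def dperm {n : ℕ} (σ : Equiv.Perm (Fin n)) (i j : Fin n) : ℕ :=
  Nat.dist (i : ℕ) (j : ℕ) + Nat.dist (σ i : ℕ) (σ j : ℕ)

/-- The breadth of a permutation: the minimum distance between two distinct entries. -/
noncomputable def breadth {n : ℕ} (σ : Equiv.Perm (Fin n)) : ℕ :=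
  sInf {d : ℕ | ∃ i j : Fin n, i ≠ j ∧ d = dperm σ i j}

/-- The pattern `σ_⟨A⟩` of `σ` obtained by deleting the entries in positions `A`. -/
noncomputable def pattern {n m : ℕ} (σ : Equiv.Perm (Fin n)) (A : Finset (Fin n))
    (h : Aᶜ.card = m) : Equiv.Perm (Fin m) :=
  (Aᶜ.orderIsoOfFin h).toEquiv.trans
    (((Equiv.subtypeEquiv (σ : Equiv.Perm (Fin n)) (fun a => by
        constructor
        · exact fun ha => Finset.mem_image_of_mem σ ha
        · intro ha
          rcases Finset.mem_image.mp ha with ⟨x, hx, hxa⟩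
          rwa [← σ.injective hxa])).trans
      ((Aᶜ.image σ).orderIsoOfFin
        (by rw [Finset.card_image_of_injective _ σ.injective, h])).toEquiv.symm))

/-- `σ_⟨A⟩ = σ_⟨B⟩` (in particular the two patterns have the same size). -/
def PatternEq {n : ℕ} (σ : Equiv.Perm (Fin n)) (A B : Finset (Fin n)) : Prop :=
  ∃ (m : ℕ) (hA : Aᶜ.card = m) (hB : Bᶜ.card = m), pattern σ A hA = pattern σ B hB

/-- `σ` is `k`-prolific: distinct `k`-element sets of positions produce distinct patterns. -/
def IsProlific {n : ℕ} (k : ℕ) (σ : Equiv.Perm (Fin n)) : Prop :=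
  ∀ A B : Finset (Fin n), A.card = k → B.card = k → A ≠ B → ¬ PatternEq σ A B


lemma sum_abs_Icc_nat : ∀ T : ℕ, (∑ t ∈ Finset.Icc (-(T:ℤ)) T, |t|) = T * (T + 1) := by
  intro T
  induction T with
  | zero => simp
  | succ T ih =>
    have hc : ((T:ℤ) + 1) = ((T+1 : ℕ) : ℤ) := by push_cast; ring
    have h1 : Finset.Icc (-((T+1:ℕ)):ℤ) ((T+1:ℕ):ℤ) =
        insert (-((T:ℤ)+1)) (insert ((T:ℤ)+1) (Finset.Icc (-(T:ℤ)) T)) := by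
      ext x; simp only [Finset.mem_Icc, Finset.mem_insert]; push_cast; omega
    have h2 : (-((T:ℤ)+1)) ∉ insert ((T:ℤ)+1) (Finset.Icc (-(T:ℤ)) T) := by
      simp only [Finset.mem_insert, Finset.mem_Icc]; omega
    have h3 : ((T:ℤ)+1) ∉ Finset.Icc (-(T:ℤ)) T := by
      simp only [Finset.mem_Icc]; omega
    rw [h1, Finset.sum_insert h2, Finset.sum_insert h3, ih]
    have h4 : |(-((T:ℤ)+1))| = (T:ℤ)+1 := by rw [abs_neg]; exact abs_of_nonneg (by positivity)
    rw [h4, abs_of_nonneg (by positivity : (0:ℤ) ≤ (T:ℤ)+1)]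
    push_cast; ring

lemma sum_abs_Icc {T : ℤ} (hT : 0 ≤ T) : (∑ t ∈ Finset.Icc (-T) T, |t|) = T * (T + 1) := by
  obtain ⟨T', rfl⟩ := Int.eq_ofNat_of_zero_le hT
  exact sum_abs_Icc_nat T'

lemma sum_window_Icc_nat : ∀ W : ℕ,
    (∑ w ∈ Finset.Icc (0:ℤ) W, (2 * ((W:ℤ) - w) + 1)) = ((W:ℤ) + 1) ^ 2 := by
  intro W
  induction W with
  | zero => simp
  | succ W ih =>
    have h1 : Finset.Icc (0:ℤ) ((W+1:ℕ):ℤ) = insert ((W:ℤ)+1) (Finset.Icc (0:ℤ) W) := by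
      ext x; simp only [Finset.mem_Icc, Finset.mem_insert]; push_cast; omega
    have h3 : ((W:ℤ)+1) ∉ Finset.Icc (0:ℤ) (W:ℤ) := by simp only [Finset.mem_Icc]; omega
    have hcard : ((Finset.Icc (0:ℤ) (W:ℤ)).card : ℤ) = (W:ℤ) + 1 := by
      rw [Int.card_Icc]; omega
    rw [h1, Finset.sum_insert h3]
    have h5 : (∑ w ∈ Finset.Icc (0:ℤ) (W:ℤ), (2 * (((W+1:ℕ):ℤ) - w) + 1))
        = (∑ w ∈ Finset.Icc (0:ℤ) (W:ℤ), ((2 * ((W:ℤ) - w) + 1) + 2)) := by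
      apply Finset.sum_congr rfl; intro w _; push_cast; ring
    rw [h5, Finset.sum_add_distrib, ih, Finset.sum_const, nsmul_eq_mul, hcard]
    push_cast; ring

lemma sum_window_Icc {W : ℤ} (hW : 0 ≤ W) :
    (∑ w ∈ Finset.Icc (0:ℤ) W, (2 * (W - w) + 1)) = (W + 1) ^ 2 := by
  obtain ⟨W', rfl⟩ := Int.eq_ofNat_of_zero_le hW
  exact sum_window_Icc_nat W'

lemma sum_bmt {T : ℤ} (hT : 0 ≤ T) (b : ℤ) :
    (∑ t ∈ Finset.Icc (-T) T, (b - 2 * |t|)) = (2*T+1) * b - 2*T*(T+1) := by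
  have hcard : ((Finset.Icc (-T) T).card : ℤ) = 2*T + 1 := by
    rw [Int.card_Icc]; omega
  have h : (∑ t ∈ Finset.Icc (-T) T, (b - 2 * |t|))
      = (∑ t ∈ Finset.Icc (-T) T, b) - 2 * (∑ t ∈ Finset.Icc (-T) T, |t|) := by
    rw [Finset.sum_sub_distrib, ← Finset.mul_sum]
  rw [h, sum_abs_Icc hT, Finset.sum_const, nsmul_eq_mul, hcard]
  ring



/-- If two window terms were both positive, the two corresponding points would be
too close, contradicting the breadth hypothesis. -/
lemma spill_one {n b : ℤ} {w : ℤ → ℤ} {T R : ℤ}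
    (hw0 : ∀ x, 0 ≤ x → x < n → 0 ≤ w x)
    (hbr : ∀ x y, 0 ≤ x → x < n → 0 ≤ y → y < n → x ≠ y → b ≤ |x - y| + |w x - w y|)
    (hR : 2 * R ≤ b + 1) {r : ℤ} (hT : 0 ≤ T) (hr1 : T ≤ r) (hr2 : r + T ≤ n - 1)
    {t t' : ℤ} (ht : t ∈ Finset.Icc (-T) T) (ht' : t' ∈ Finset.Icc (-T) T) (hne : t ≠ t')
    (hp : 0 < R - |t| - w (r + t)) (hp' : 0 < R - |t'| - w (r + t')) : False := by
  rw [Finset.mem_Icc] at ht ht'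
  have hx : 0 ≤ r + t ∧ r + t < n := by omega
  have hy : 0 ≤ r + t' ∧ r + t' < n := by omega
  have hxy : r + t ≠ r + t' := by omega
  have hb := hbr _ _ hx.1 hx.2 hy.1 hy.2 hxy
  have h1 : |r + t - (r + t')| ≤ |t| + |t'| := by
    have : r + t - (r + t') = t - t' := by ring
    rw [this]
    exact abs_sub t t'
  have hw1 : 0 ≤ w (r + t) := hw0 _ hx.1 hx.2
  have hw2 : 0 ≤ w (r + t') := hw0 _ hy.1 hy.2
  have h2 : |w (r + t) - w (r + t')| ≤ w (r + t) + w (r + t') := by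
    rw [abs_le]; omega
  have h3 : 0 ≤ |t| := abs_nonneg t
  have h4 : 0 ≤ |t'| := abs_nonneg t'
  omega

/-- Extraction: if the spill sum is at least `s ≥ 1`, a single deep point is responsible. -/
lemma spill_extract {n b : ℤ} {w : ℤ → ℤ} {T R : ℤ}
    (hw0 : ∀ x, 0 ≤ x → x < n → 0 ≤ w x)
    (hbr : ∀ x y, 0 ≤ x → x < n → 0 ≤ y → y < n → x ≠ y → b ≤ |x - y| + |w x - w y|)
    (hR : 2 * R ≤ b + 1) {r : ℤ} (hT : 0 ≤ T) (hr1 : T ≤ r) (hr2 : r + T ≤ n - 1)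
    {s : ℤ} (hs : 1 ≤ s)
    (hsum : s ≤ ∑ t ∈ Finset.Icc (-T) T, max 0 (R - |t| - w (r + t))) :
    ∃ j, 0 ≤ j ∧ j < n ∧ w j + |j - r| ≤ R - s := by
  classical
  -- there is a positive term
  have hpos : ∃ t₀ ∈ Finset.Icc (-T) T, 0 < R - |t₀| - w (r + t₀) := by
    by_contra hno
    push_neg at hno
    have : (∑ t ∈ Finset.Icc (-T) T, max 0 (R - |t| - w (r + t))) ≤ 0 := by
      apply Finset.sum_nonpos
      intro t ht
      have := hno t ht
      omega
    omega
  obtain ⟨t₀, ht₀, hpos₀⟩ := hpos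
  have hsingle : (∑ t ∈ Finset.Icc (-T) T, max 0 (R - |t| - w (r + t)))
      = max 0 (R - |t₀| - w (r + t₀)) := by
    apply Finset.sum_eq_single_of_mem t₀ ht₀
    intro t ht hne
    have : ¬ (0 < R - |t| - w (r + t)) := by
      intro hp
      exact spill_one hw0 hbr hR hT hr1 hr2 ht ht₀ hne hp hpos₀
    omega
  rw [hsingle] at hsum
  refine ⟨r + t₀, ?_, ?_, ?_⟩
  · rw [Finset.mem_Icc] at ht₀; omega
  · rw [Finset.mem_Icc] at ht₀; omega
  · have : |r + t₀ - r| = |t₀| := by congr 1; ring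
    rw [this]
    omega

/-- The spill sum is at most `R`. -/
lemma spill_le {n b : ℤ} {w : ℤ → ℤ} {T R : ℤ}
    (hw0 : ∀ x, 0 ≤ x → x < n → 0 ≤ w x)
    (hbr : ∀ x y, 0 ≤ x → x < n → 0 ≤ y → y < n → x ≠ y → b ≤ |x - y| + |w x - w y|)
    (hR : 2 * R ≤ b + 1) (hR0 : 0 ≤ R) {r : ℤ} (hT : 0 ≤ T) (hr1 : T ≤ r)
    (hr2 : r + T ≤ n - 1) :
    (∑ t ∈ Finset.Icc (-T) T, max 0 (R - |t| - w (r + t))) ≤ R := by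
  by_contra hc
  push_neg at hc
  obtain ⟨j, hj1, hj2, hj3⟩ := spill_extract hw0 hbr hR hT hr1 hr2
    (by omega : (1:ℤ) ≤ R + 1) (by omega)
  have := hw0 j hj1 hj2
  have := abs_nonneg (j - r)
  omega

/-- Counting columns covered by windows around points with small `g`-value. -/
lemma window_count {n : ℤ} (g : ℤ → ℤ) (W : ℤ)
    (hg0 : ∀ j, 0 ≤ j → j < n → 0 ≤ g j)
    (hginj : ∀ x y, 0 ≤ x → x < n → 0 ≤ y → y < n → g x = g y → x = y)
    (A : Finset ℤ)
    (hA : ∀ r ∈ A, ∃ j, 0 ≤ j ∧ j < n ∧ g j + |j - r| ≤ W) :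
    (A.card : ℤ) ≤ (W + 1) ^ 2 := by
  classical
  rcases le_or_gt 0 W with hW | hW
  · -- main case
    set F := (Finset.Icc (0:ℤ) (n-1)).filter (fun j => g j ≤ W) with hF
    have hsub : A ⊆ F.biUnion (fun j => Finset.Icc (j - (W - g j)) (j + (W - g j))) := by
      intro r hr
      obtain ⟨j, hj1, hj2, hj3⟩ := hA r hr
      have habs := abs_nonneg (j - r)
      have h1 : j ∈ F := by
        rw [hF, Finset.mem_filter, Finset.mem_Icc]
        refine ⟨⟨hj1, by omega⟩, by omega⟩
      rw [Finset.mem_biUnion]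
      refine ⟨j, h1, ?_⟩
      rw [Finset.mem_Icc]
      have := abs_le.mp (le_trans (by omega : |j - r| ≤ W - g j) (le_refl _))
      omega
    have h2 : (A.card : ℤ) ≤ ∑ j ∈ F, ((Finset.Icc (j - (W - g j)) (j + (W - g j))).card : ℤ) := by
      calc (A.card : ℤ) ≤ ((F.biUnion (fun j => Finset.Icc (j - (W - g j)) (j + (W - g j)))).card : ℤ) := by
            exact_mod_cast Finset.card_le_card hsub
        _ ≤ _ := by exact_mod_cast Finset.card_biUnion_le
    have h3 : ∀ j ∈ F, ((Finset.Icc (j - (W - g j)) (j + (W - g j))).card : ℤ)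
        = 2 * (W - g j) + 1 := by
      intro j hj
      rw [hF, Finset.mem_filter, Finset.mem_Icc] at hj
      rw [Int.card_Icc]
      have : (j + (W - g j) + 1 - (j - (W - g j))) = 2 * (W - g j) + 1 := by ring
      rw [this, Int.toNat_of_nonneg (by omega)]
    have h4 : (A.card : ℤ) ≤ ∑ j ∈ F, (2 * (W - g j) + 1) := by
      rw [← Finset.sum_congr rfl h3]
      exact h2
    have hinjF : ∀ x ∈ F, ∀ y ∈ F, g x = g y → x = y := by
      intro x hx y hy
      rw [hF, Finset.mem_filter, Finset.mem_Icc] at hx hy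
      exact hginj x y hx.1.1 (by omega) hy.1.1 (by omega)
    have h5 : ∑ j ∈ F, (2 * (W - g j) + 1) = ∑ u ∈ F.image g, (2 * (W - u) + 1) := by
      rw [Finset.sum_image hinjF]
    have h6 : F.image g ⊆ Finset.Icc 0 W := by
      intro u hu
      rw [Finset.mem_image] at hu
      obtain ⟨j, hj, rfl⟩ := hu
      rw [hF, Finset.mem_filter, Finset.mem_Icc] at hj
      rw [Finset.mem_Icc]
      exact ⟨hg0 j hj.1.1 (by omega), hj.2⟩
    have h7 : ∑ u ∈ F.image g, (2 * (W - u) + 1) ≤ ∑ u ∈ Finset.Icc 0 W, (2 * (W - u) + 1) := by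
      apply Finset.sum_le_sum_of_subset_of_nonneg h6
      intro u hu _
      rw [Finset.mem_Icc] at hu
      omega
    have h8 := sum_window_Icc hW
    omega
  · -- degenerate case : A is empty
    have : A = ∅ := by
      rw [Finset.eq_empty_iff_forall_notMem]
      intro r hr
      obtain ⟨j, hj1, hj2, hj3⟩ := hA r hr
      have := hg0 j hj1 hj2
      have := abs_nonneg (j - r)
      omega
    rw [this]
    simp only [Finset.card_empty, Nat.cast_zero]
    positivity



/-- Key inequality: disjoint value-intervals around the entries in a window of columns. -/
lemma key_ineq {n b T U : ℤ} (v : ℤ → ℤ)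
    (hT : 0 ≤ T) (hU : T ≤ U) (hbU : T + U = b - 1)
    (hrange : ∀ x, 0 ≤ x → x < n → 0 ≤ v x ∧ v x < n)
    (hbr : ∀ x y, 0 ≤ x → x < n → 0 ≤ y → y < n → x ≠ y → b ≤ |x - y| + |v x - v y|)
    {r : ℤ} (hr1 : T ≤ r) (hr2 : r + T ≤ n - 1) :
    (2*T+1) * b - 2*T*(T+1)
      - (∑ t ∈ Finset.Icc (-T) T, max 0 ((T - |t|) - v (r + t)))
      - (∑ t ∈ Finset.Icc (-T) T, max 0 (v (r + t) + (U - |t|) - (n-1))) ≤ n := by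
  classical
  set J : ℤ → Finset ℤ := fun t =>
    Finset.Icc (max 0 (v (r + t) - (T - |t|))) (min (n-1) (v (r + t) + (U - |t|))) with hJ
  have hcol : ∀ t ∈ Finset.Icc (-T) T, 0 ≤ r + t ∧ r + t < n := by
    intro t ht; rw [Finset.mem_Icc] at ht; omega
  -- disjointness
  have hdisj : ∀ t ∈ Finset.Icc (-T) T, ∀ t' ∈ Finset.Icc (-T) T, t ≠ t' →
      Disjoint (J t) (J t') := by
    intro t ht t' ht' hne
    rw [Finset.disjoint_left]
    intro z hz hz'
    rw [hJ] at hz hz'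
    simp only [Finset.mem_Icc, le_min_iff, max_le_iff] at hz hz'
    have h1 := hcol t ht
    have h2 := hcol t' ht'
    have hb := hbr _ _ h1.1 h1.2 h2.1 h2.2 (by rw [Finset.mem_Icc] at ht ht'; omega)
    have e1 : |r + t - (r + t')| ≤ |t| + |t'| := by
      have h : r + t - (r + t') = t - t' := by ring
      rw [h]; exact abs_sub t t'
    have e2 : |v (r + t) - v (r + t')| ≤ (T + U) - |t| - |t'| := by
      rw [abs_le]; omega
    omega
  -- inside the range of values
  have hsub : (Finset.Icc (-T) T).biUnion J ⊆ Finset.Icc (0:ℤ) (n-1) := by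
    intro z hz
    rw [Finset.mem_biUnion] at hz
    obtain ⟨t, ht, hz⟩ := hz
    rw [hJ] at hz
    simp only [Finset.mem_Icc, le_min_iff, max_le_iff] at hz ⊢
    omega
  -- counting
  have hn0 : 0 ≤ n := by
    rcases hrange 0 le_rfl (by by_contra hc; push_neg at hc; omega) with ⟨h, h'⟩
    omega
  have hcards : ((((Finset.Icc (-T) T).biUnion J).card : ℤ)) ≤ n := by
    have h1 := Finset.card_le_card hsub
    have h2 : ((Finset.Icc (0:ℤ) (n-1)).card : ℤ) = n := by
      rw [Int.card_Icc]
      rw [Int.toNat_of_nonneg (by omega)]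
      omega
    have h3 : ((((Finset.Icc (-T) T).biUnion J).card : ℤ))
        ≤ ((Finset.Icc (0:ℤ) (n-1)).card : ℤ) := by exact_mod_cast h1
    omega
  rw [Finset.card_biUnion hdisj] at hcards
  push_cast at hcards
  -- lower bound for each interval's size
  have hlow : ∀ t ∈ Finset.Icc (-T) T,
      (b - 2*|t|) - max 0 ((T - |t|) - v (r + t)) - max 0 (v (r + t) + (U - |t|) - (n-1))
        ≤ ((J t).card : ℤ) := by
    intro t ht
    rw [hJ]
    simp only
    rw [Int.card_Icc]
    have htn := Int.self_le_toNat (min (n-1) (v (r + t) + (U - |t|)) + 1 - max 0 (v (r + t) - (T - |t|)))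
    have h1 := hcol t ht
    have h2 := hrange _ h1.1 h1.2
    rw [Finset.mem_Icc] at ht
    have h3 : 0 ≤ |t| := abs_nonneg t
    have h4 : |t| ≤ T := abs_le.mpr ⟨ht.1, ht.2⟩
    omega
  have hsum : (∑ t ∈ Finset.Icc (-T) T,
      ((b - 2*|t|) - max 0 ((T - |t|) - v (r + t)) - max 0 (v (r + t) + (U - |t|) - (n-1))))
      ≤ ∑ t ∈ Finset.Icc (-T) T, ((J t).card : ℤ) := Finset.sum_le_sum hlow
  rw [Finset.sum_sub_distrib, Finset.sum_sub_distrib, sum_bmt hT b] at hsum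
  omega



lemma final_arith {T b X x y n : ℤ} (hT1 : 1 ≤ T)
    (hb : b = 2*T+1 ∨ b = 2*T+2) (hodd : b = 2*T+1 → 2 ≤ T)
    (hX1 : 1 ≤ X) (hX2 : X ≤ b - 2)
    (hxy : 2*x = X+1 ∨ 2*x = X) (hy : y = X - x)
    (hn : n = (2*T+1) * b - 2*T*(T+1) - b + X)
    (hfin : n - 2*T ≤ x^2 + y^2) : False := by
  rcases hb with hbe | hbe <;> rcases hxy with h2x | h2x
  · have hT2 : 2 ≤ T := hodd hbe
    have hx1 : 1 ≤ x := by omega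
    have hxT : x ≤ T := by omega
    nlinarith [mul_self_le_mul_self (by omega : (0:ℤ) ≤ x - 1) (by omega : x - 1 ≤ T - 1)]
  · have hT2 : 2 ≤ T := hodd hbe
    have hx1 : 1 ≤ x := by omega
    have hxT : x ≤ T - 1 := by omega
    nlinarith [mul_self_le_mul_self (by omega : (0:ℤ) ≤ x) (by omega : x ≤ T - 1)]
  · have hx1 : 1 ≤ x := by omega
    have hxT : x ≤ T := by omega
    nlinarith [mul_self_le_mul_self (by omega : (0:ℤ) ≤ x - 1) (by omega : x - 1 ≤ T - 1)]
  · have hx1 : 1 ≤ x := by omega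
    have hxT : x ≤ T := by omega
    nlinarith [mul_self_le_mul_self (by omega : (0:ℤ) ≤ x) (by omega : x ≤ T), hT1]



/-- Core lower bound: a permutation-like function on `[0,n)` with pairwise
taxicab distances at least `b` forces `n` to be large. -/
lemma core_bound {n b T U : ℤ} (v : ℤ → ℤ)
    (hT1 : 1 ≤ T) (hb1 : 2*T + 1 ≤ b) (hb2 : b ≤ 2*T + 2)
    (hodd : b = 2*T + 1 → 2 ≤ T)
    (hU : U = b - 1 - T)
    (hn2 : 2 ≤ n)
    (hrange : ∀ x, 0 ≤ x → x < n → 0 ≤ v x ∧ v x < n)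
    (hinj : ∀ x y, 0 ≤ x → x < n → 0 ≤ y → y < n → v x = v y → x = y)
    (hbr : ∀ x y, 0 ≤ x → x < n → 0 ≤ y → y < n → x ≠ y → b ≤ |x - y| + |v x - v y|) :
    (2*T+1) * b - 2*T^2 - 2*T - 1 ≤ n := by
  classical
  have hT0 : 0 ≤ T := by omega
  have hTU : T ≤ U := by omega
  have hbU : T + U = b - 1 := by omega
  have hU1 : 1 ≤ U := by omega
  -- the value function for the "top" spill
  set w : ℤ → ℤ := fun z => n - 1 - v z with hw
  have hw0 : ∀ x, 0 ≤ x → x < n → 0 ≤ w x := by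
    intro x h1 h2; have := hrange x h1 h2; simp only [hw]; omega
  have hv0 : ∀ x, 0 ≤ x → x < n → 0 ≤ v x := fun x h1 h2 => (hrange x h1 h2).1
  have hwbr : ∀ x y, 0 ≤ x → x < n → 0 ≤ y → y < n → x ≠ y → b ≤ |x - y| + |w x - w y| := by
    intro x y h1 h2 h3 h4 h5
    have h6 := hbr x y h1 h2 h3 h4 h5
    have h7 : |w x - w y| = |v x - v y| := by
      simp only [hw]
      have : n - 1 - v x - (n - 1 - v y) = -(v x - v y) := by ring
      rw [this, abs_neg]
    omega
  have hwinj : ∀ x y, 0 ≤ x → x < n → 0 ≤ y → y < n → w x = w y → x = y := by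
    intro x y h1 h2 h3 h4 h5
    apply hinj x y h1 h2 h3 h4
    simp only [hw] at h5; omega
  -- n ≥ b from adjacent columns 0 and 1
  have hnb : b ≤ n := by
    have h0 := hrange 0 le_rfl (by omega)
    have h1 := hrange 1 (by omega) (by omega)
    have h2 := hbr 0 1 le_rfl (by omega) (by omega) (by omega) (by omega)
    have h3 : |(0:ℤ) - 1| = 1 := by norm_num
    have h4 : |v 0 - v 1| ≤ n - 1 := by rw [abs_le]; omega
    omega
  -- spill sums
  set sL : ℤ → ℤ := fun r => ∑ t ∈ Finset.Icc (-T) T, max 0 ((T - |t|) - v (r + t)) with hsL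
  set sU : ℤ → ℤ := fun r => ∑ t ∈ Finset.Icc (-T) T, max 0 (v (r + t) + (U - |t|) - (n-1)) with hsU
  have hsUw : ∀ r, sU r = ∑ t ∈ Finset.Icc (-T) T, max 0 ((U - |t|) - w (r + t)) := by
    intro r
    apply Finset.sum_congr rfl
    intro t _
    simp only [hw]
    congr 1
    ring
  have key : ∀ r, T ≤ r → r + T ≤ n - 1 →
      (2*T+1) * b - 2*T*(T+1) - sL r - sU r ≤ n := by
    intro r h1 h2
    exact key_ineq v hT0 hTU hbU hrange hbr h1 h2
  have hRlow : 2 * T ≤ b + 1 := by omega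
  have hRtop : 2 * U ≤ b + 1 := by omega
  have sL_le : ∀ r, T ≤ r → r + T ≤ n - 1 → sL r ≤ T := by
    intro r h1 h2
    exact spill_le hv0 hbr hRlow hT0 hT0 h1 h2
  have sU_le : ∀ r, T ≤ r → r + T ≤ n - 1 → sU r ≤ U := by
    intro r h1 h2
    rw [hsUw r]
    exact spill_le hw0 hwbr hRtop (by omega : (0:ℤ) ≤ U) hT0 h1 h2
  -- suppose the conclusion fails
  by_contra hcon
  push_neg at hcon
  set Sc : ℤ := (2*T+1) * b - 2*T*(T+1) with hSc
  have hSceq : (2*T+1) * b - 2*T^2 - 2*T - 1 = Sc - 1 := by rw [hSc]; ring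
  have hcon2 : n ≤ Sc - 2 := by omega
  -- the window fits : a middle column exists
  have hmid0 : T ≤ n - 1 - T := by omega
  set X : ℤ := n - Sc + b with hX
  have hX1 : 1 ≤ X := by
    have h1 := key T le_rfl (by omega)
    have h2 := sL_le T le_rfl (by omega)
    have h3 := sU_le T le_rfl (by omega)
    omega
  have hX2 : X ≤ b - 2 := by omega
  set x : ℤ := (X + 1) / 2 with hx
  set y : ℤ := X - x with hy
  have hxy : 2 * x = X + 1 ∨ 2 * x = X := by omega
  set s : ℤ := T + 1 - x with hs
  set s' : ℤ := (b - X) + 1 - s with hs'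
  have hs1 : 1 ≤ s := by omega
  have hs'1 : 1 ≤ s' := by omega
  have hWL : T - s = x - 1 := by omega
  have hWU : U - s' = y - 1 := by omega
  set M : Finset ℤ := Finset.Icc T (n - 1 - T) with hM
  have hMcard : (M.card : ℤ) = n - 2*T := by
    rw [hM, Int.card_Icc, Int.toNat_of_nonneg (by omega)]
    ring
  set A : Finset ℤ := M.filter (fun r => s ≤ sL r) with hA
  set B : Finset ℤ := M.filter (fun r => s' ≤ sU r) with hB
  have hdichot : M ⊆ A ∪ B := by
    intro r hr
    rw [hM, Finset.mem_Icc] at hr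
    have h1 := key r hr.1 (by omega)
    rw [Finset.mem_union, hA, hB, Finset.mem_filter, Finset.mem_filter]
    have hrM : r ∈ M := by rw [hM, Finset.mem_Icc]; omega
    by_contra hc
    push_neg at hc
    have h2 := (hc.1 hrM)
    have h3 := (hc.2 hrM)
    omega
  have hAcount : (A.card : ℤ) ≤ x ^ 2 := by
    have h1 : ∀ r ∈ A, ∃ j, 0 ≤ j ∧ j < n ∧ v j + |j - r| ≤ (x - 1) := by
      intro r hr
      rw [hA, Finset.mem_filter, hM, Finset.mem_Icc] at hr
      obtain ⟨j, hj1, hj2, hj3⟩ := spill_extract hv0 hbr hRlow hT0 hr.1.1 (by omega) hs1 hr.2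
      exact ⟨j, hj1, hj2, by omega⟩
    have := window_count v (x - 1) hv0 hinj A h1
    have hxx : (x - 1 + 1) = x := by ring
    rw [hxx] at this
    exact this
  have hBcount : (B.card : ℤ) ≤ y ^ 2 := by
    have h1 : ∀ r ∈ B, ∃ j, 0 ≤ j ∧ j < n ∧ w j + |j - r| ≤ (y - 1) := by
      intro r hr
      rw [hB, Finset.mem_filter, hM, Finset.mem_Icc] at hr
      have hr2 := hr.2
      rw [hsUw r] at hr2
      obtain ⟨j, hj1, hj2, hj3⟩ := spill_extract hw0 hwbr hRtop hT0 hr.1.1 (by omega) hs'1 hr2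
      exact ⟨j, hj1, hj2, by omega⟩
    have := window_count w (y - 1) hw0 hwinj B h1
    have hyy : (y - 1 + 1) = y := by ring
    rw [hyy] at this
    exact this
  have hfinal : n - 2*T ≤ x ^ 2 + y ^ 2 := by
    have h1 : M.card ≤ A.card + B.card :=
      le_trans (Finset.card_le_card hdichot) (Finset.card_union_le A B)
    have h2 : (M.card : ℤ) ≤ (A.card : ℤ) + (B.card : ℤ) := by exact_mod_cast h1
    omega
  exact final_arith hT1 (by omega) hodd hX1 hX2 hxy hy (by omega) hfinal

lemma pattern_lt_iff {n m : ℕ} (σ : Equiv.Perm (Fin n)) (A : Finset (Fin n)) (h : Aᶜ.card = m)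
    (s t : Fin m) :
    pattern σ A h s < pattern σ A h t ↔
      σ ((Aᶜ.orderIsoOfFin h s : Fin n)) < σ ((Aᶜ.orderIsoOfFin h t : Fin n)) := by
  unfold pattern
  simp only [Equiv.trans_apply, Equiv.subtypeEquiv_apply, RelIso.coe_fn_toEquiv]
  constructor
  · intro hlt
    have := ((Aᶜ.image σ).orderIsoOfFin
        (by rw [Finset.card_image_of_injective _ σ.injective, h])).symm.lt_iff_lt.mp hlt
    exact this
  · intro hlt
    apply ((Aᶜ.image σ).orderIsoOfFin
        (by rw [Finset.card_image_of_injective _ σ.injective, h])).symm.lt_iff_lt.mpr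
    exact hlt

lemma perm_eq_of_lt_iff {m : ℕ} (π₁ π₂ : Equiv.Perm (Fin m))
    (h : ∀ s t, π₁ s < π₁ t ↔ π₂ s < π₂ t) : π₁ = π₂ := by
  have hcard : (Finset.univ : Finset (Fin m)).card = m := by simp
  have hmono : StrictMono (fun a => π₂ (π₁.symm a)) := by
    intro a b hab
    have h2 : π₁ (π₁.symm a) < π₁ (π₁.symm b) := by simpa using hab
    exact (h _ _).mp h2
  have h1 := Finset.orderEmbOfFin_unique hcard (fun x => Finset.mem_univ (π₂ (π₁.symm x))) hmono
  have h2 := Finset.orderEmbOfFin_unique hcard (fun x => Finset.mem_univ x)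
    (fun a b hab => hab : StrictMono (fun x : Fin m => x))
  have h3 : (fun a => π₂ (π₁.symm a)) = (fun x : Fin m => x) := by rw [h1, ← h2]
  apply Equiv.ext
  intro s
  have h4 := congrFun h3 (π₁ s)
  simpa using h4.symm

lemma orderIso_comp {n m : ℕ} {C₁ C₂ : Finset (Fin n)} (h₁ : C₁.card = m) (h₂ : C₂.card = m)
    (φ : Fin n → Fin n) (hmem : ∀ x ∈ C₁, φ x ∈ C₂)
    (hmono : ∀ x ∈ C₁, ∀ y ∈ C₁, x < y → φ x < φ y) :
    ∀ x : Fin m, (C₂.orderIsoOfFin h₂ x : Fin n) = φ ((C₁.orderIsoOfFin h₁ x : Fin n)) := by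
  have hf : StrictMono (fun x : Fin m => φ (C₁.orderEmbOfFin h₁ x)) := by
    intro a b hab
    exact hmono _ (Finset.orderEmbOfFin_mem C₁ h₁ a) _ (Finset.orderEmbOfFin_mem C₁ h₁ b)
      ((C₁.orderEmbOfFin h₁).strictMono hab)
  have hmemf : ∀ x : Fin m, φ (C₁.orderEmbOfFin h₁ x) ∈ C₂ :=
    fun x => hmem _ (Finset.orderEmbOfFin_mem C₁ h₁ x)
  have huniq := Finset.orderEmbOfFin_unique h₂ hmemf hf
  intro x
  rw [Finset.coe_orderIsoOfFin_apply, Finset.coe_orderIsoOfFin_apply, ← huniq]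

lemma natdist_cast (a b : ℕ) : ((Nat.dist a b : ℕ) : ℤ) = |(a:ℤ) - (b:ℤ)| := by
  have h0 : Nat.dist a b = (a - b) + (b - a) := rfl
  rcases le_total a b with h | h
  · have h1 : Nat.dist a b = b - a := by omega
    rw [h1, Nat.cast_sub h, abs_sub_comm, abs_of_nonneg]
    have : (a:ℤ) ≤ (b:ℤ) := by exact_mod_cast h
    linarith
  · have h1 : Nat.dist a b = a - b := by omega
    rw [h1, Nat.cast_sub h, abs_of_nonneg]
    have : (b:ℤ) ≤ (a:ℤ) := by exact_mod_cast h
    linarith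

lemma not_prolific_of_close {n k : ℕ} (σ : Equiv.Perm (Fin n)) (hk : 1 ≤ k) (hkn : k < n)
    (i j : Fin n) (hij : (i:ℕ) < (j:ℕ)) (hd : dperm σ i j ≤ k + 1) : ¬ IsProlific k σ := by
  classical
  intro hp
  have hij' : i ≠ j := by intro hEq; rw [hEq] at hij; omega
  have hσij : (σ i : ℕ) ≠ (σ j : ℕ) := by
    intro hEq
    exact hij' (σ.injective (Fin.val_injective hEq))
  set a := ((σ i : Fin n) : ℕ) with ha
  set c := ((σ j : Fin n) : ℕ) with hc
  set S₁ : Finset (Fin n) := univ.filter (fun x => (i:ℕ) < (x:ℕ) ∧ (x:ℕ) < (j:ℕ)) with hS₁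
  set S₂ : Finset (Fin n) := univ.filter
      (fun x => min a c < ((σ x : Fin n):ℕ) ∧ ((σ x : Fin n):ℕ) < max a c) with hS₂
  have hdteq : dperm σ i j = ((j:ℕ) - (i:ℕ)) + Nat.dist a c := by
    unfold dperm
    have h1 : Nat.dist (i:ℕ) (j:ℕ) = ((i:ℕ) - (j:ℕ)) + ((j:ℕ) - (i:ℕ)) := rfl
    have h2 : Nat.dist ((σ i : Fin n):ℕ) ((σ j : Fin n):ℕ) = Nat.dist a c := rfl
    omega
  have hdistac : Nat.dist a c = max a c - min a c ∧ 1 ≤ Nat.dist a c := by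
    have h1 : Nat.dist a c = (a - c) + (c - a) := rfl
    omega
  -- cardinality bounds
  have hcard₁ : S₁.card ≤ (j:ℕ) - (i:ℕ) - 1 := by
    have h1 : S₁.card ≤ (Finset.Ioo (i:ℕ) (j:ℕ)).card := by
      refine Finset.card_le_card_of_injOn (fun x => (x:ℕ)) ?_
        (fun x _ y _ hxy => Fin.val_injective hxy)
      intro x hx; rw [hS₁, Finset.mem_coe, Finset.mem_filter] at hx
      rw [Finset.mem_coe, Finset.mem_Ioo]; exact hx.2
    rwa [Nat.card_Ioo] at h1
  have hcard₂ : S₂.card ≤ max a c - min a c - 1 := by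
    have h1 : S₂.card ≤ (Finset.Ioo (min a c) (max a c)).card := by
      refine Finset.card_le_card_of_injOn (fun x => ((σ x : Fin n) : ℕ)) ?_
        (fun x _ y _ hxy => σ.injective (Fin.val_injective hxy))
      intro x hx; rw [hS₂, Finset.mem_coe, Finset.mem_filter] at hx
      rw [Finset.mem_coe, Finset.mem_Ioo]; exact hx.2
    rwa [Nat.card_Ioo] at h1
  set S : Finset (Fin n) := S₁ ∪ S₂ with hS
  have hiS : i ∉ S := by
    rw [hS, Finset.mem_union, hS₁, hS₂, Finset.mem_filter, Finset.mem_filter]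
    push_neg
    constructor
    · intro _; omega
    · intro _; rw [← ha]; omega
  have hjS : j ∉ S := by
    rw [hS, Finset.mem_union, hS₁, hS₂, Finset.mem_filter, Finset.mem_filter]
    push_neg
    constructor
    · intro _; omega
    · intro _; rw [← hc]; omega
  have hScard : S.card ≤ k - 1 := by
    have h1 := Finset.card_union_le S₁ S₂
    have h2 : S.card = (S₁ ∪ S₂).card := by rw [hS]
    omega
  -- pad S to a set A of size k - 1 avoiding i and j
  have hsub : S ⊆ univ \ {i, j} := by
    intro x hx
    rw [Finset.mem_sdiff]
    refine ⟨Finset.mem_univ x, ?_⟩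
    rw [Finset.mem_insert, Finset.mem_singleton]
    rintro (rfl | rfl)
    · exact hiS hx
    · exact hjS hx
  have hpair : ({i, j} : Finset (Fin n)).card = 2 := by
    rw [Finset.card_insert_of_notMem (by simpa using hij'), Finset.card_singleton]
  have hcompl_card : (univ \ ({i, j} : Finset (Fin n))).card = n - 2 := by
    rw [Finset.card_sdiff_of_subset (Finset.subset_univ _), hpair]
    simp
  obtain ⟨A, hSA, hA2, hAcard⟩ :=
    Finset.exists_subsuperset_card_eq hsub (by omega : S.card ≤ k - 1)
      (by omega : k - 1 ≤ (univ \ ({i, j} : Finset (Fin n))).card)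
  have hiA : i ∉ A := by
    intro hmem
    have := hA2 hmem
    rw [Finset.mem_sdiff] at this
    exact this.2 (by simp)
  have hjA : j ∉ A := by
    intro hmem
    have := hA2 hmem
    rw [Finset.mem_sdiff] at this
    exact this.2 (by simp)
  set B₁ : Finset (Fin n) := insert i A with hB₁
  set B₂ : Finset (Fin n) := insert j A with hB₂
  have hB₁card : B₁.card = k := by
    rw [hB₁, Finset.card_insert_of_notMem hiA, hAcard]; omega
  have hB₂card : B₂.card = k := by
    rw [hB₂, Finset.card_insert_of_notMem hjA, hAcard]; omega
  have hBne : B₁ ≠ B₂ := by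
    intro hEq
    have h1 : i ∈ B₂ := by rw [← hEq, hB₁]; exact Finset.mem_insert_self i A
    rw [hB₂, Finset.mem_insert] at h1
    rcases h1 with h1 | h1
    · exact hij' h1
    · exact hiA h1
  apply hp B₁ B₂ hB₁card hB₂card hBne
  have hc₁ : B₁ᶜ.card = n - k := by
    rw [Finset.card_compl, hB₁card, Fintype.card_fin]
  have hc₂ : B₂ᶜ.card = n - k := by
    rw [Finset.card_compl, hB₂card, Fintype.card_fin]
  refine ⟨n - k, hc₁, hc₂, ?_⟩
  -- facts about members of B₁ᶜ
  have hmemC : ∀ x : Fin n, x ∈ B₁ᶜ → x ≠ i ∧ x ∉ A ∧ x ∉ S := by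
    intro x hx
    rw [Finset.mem_compl, hB₁, Finset.mem_insert] at hx
    push_neg at hx
    exact ⟨hx.1, hx.2, fun hS' => hx.2 (hSA hS')⟩
  have hpos : ∀ x : Fin n, x ∈ B₁ᶜ → x ≠ j → ((x:ℕ) < (i:ℕ) ∨ (j:ℕ) < (x:ℕ)) := by
    intro x hx hxj
    obtain ⟨hxi, hxA, hxS⟩ := hmemC x hx
    have h1 : x ∉ S₁ := fun h => hxS (Finset.mem_union_left _ h)
    rw [hS₁, Finset.mem_filter] at h1
    push_neg at h1
    have h2 := h1 (Finset.mem_univ x)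
    have h3 : (x:ℕ) ≠ (i:ℕ) := fun h => hxi (Fin.val_injective h)
    have h4 : (x:ℕ) ≠ (j:ℕ) := fun h => hxj (Fin.val_injective h)
    omega
  have hval : ∀ x : Fin n, x ∈ B₁ᶜ → x ≠ j →
      (((σ x : Fin n):ℕ) < min a c ∨ max a c < ((σ x : Fin n):ℕ)) := by
    intro x hx hxj
    obtain ⟨hxi, hxA, hxS⟩ := hmemC x hx
    have h1 : x ∉ S₂ := fun h => hxS (Finset.mem_union_right _ h)
    rw [hS₂, Finset.mem_filter] at h1
    push_neg at h1
    have h2 := h1 (Finset.mem_univ x)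
    have h3 : ((σ x : Fin n):ℕ) ≠ a := by
      rw [ha]; intro h; exact hxi (σ.injective (Fin.val_injective h))
    have h4 : ((σ x : Fin n):ℕ) ≠ c := by
      rw [hc]; intro h; exact hxj (σ.injective (Fin.val_injective h))
    omega
  -- the swap
  set φ : Fin n → Fin n := fun x => Equiv.swap i j x with hφ
  have hφj : φ j = i := by rw [hφ]; simp [Equiv.swap_apply_right]
  have hφne : ∀ x : Fin n, x ≠ i → x ≠ j → φ x = x := by
    intro x h1 h2; rw [hφ]; exact Equiv.swap_apply_of_ne_of_ne h1 h2
  have hφmem : ∀ x ∈ B₁ᶜ, φ x ∈ B₂ᶜ := by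
    intro x hx
    obtain ⟨hxi, hxA, _⟩ := hmemC x hx
    rw [Finset.mem_compl, hB₂, Finset.mem_insert]
    push_neg
    by_cases hxj : x = j
    · rw [hxj, hφj]
      exact ⟨hij'.symm ∘ Eq.symm ∘ id, hiA⟩
    · rw [hφne x hxi hxj]
      exact ⟨hxj, hxA⟩
  have hφmono : ∀ x ∈ B₁ᶜ, ∀ y ∈ B₁ᶜ, x < y → φ x < φ y := by
    intro x hx y hy hxy
    rw [Fin.lt_def] at hxy ⊢
    obtain ⟨hxi, _, _⟩ := hmemC x hx
    obtain ⟨hyi, _, _⟩ := hmemC y hy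
    by_cases hxj : x = j
    · have hyj : y ≠ j := by
        intro h; rw [hxj, h] at hxy; omega
      have h1 := hpos y hy hyj
      rw [hxj] at hxy
      rw [hxj, hφj, hφne y hyi hyj]
      omega
    · by_cases hyj : y = j
      · have h1 := hpos x hx hxj
        rw [hyj] at hxy
        rw [hyj, hφj, hφne x hxi hxj]
        omega
      · rw [hφne x hxi hxj, hφne y hyi hyj]
        exact hxy
  have hcomp := orderIso_comp hc₁ hc₂ φ hφmem hφmono
  -- value comparison transfer
  have hvaliff : ∀ x, x ∈ B₁ᶜ → ∀ y, y ∈ B₁ᶜ →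
      (σ x < σ y ↔ σ (φ x) < σ (φ y)) := by
    intro x hx y hy
    by_cases hxj : x = j
    · by_cases hyj : y = j
      · rw [hxj, hyj]
        constructor <;> (intro hlt; exact absurd hlt (lt_irrefl _))
      · have h1 := hval y hy hyj
        obtain ⟨hxi, _, _⟩ := hmemC x hx
        obtain ⟨hyi, _, _⟩ := hmemC y hy
        rw [hxj, hφj, hφne y hyi hyj, Fin.lt_def, Fin.lt_def]
        rw [← ha, ← hc] at *
        omega
    · by_cases hyj : y = j
      · have h1 := hval x hx hxj
        obtain ⟨hxi, _, _⟩ := hmemC x hx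
        rw [hyj, hφj, hφne x hxi hxj, Fin.lt_def, Fin.lt_def]
        rw [← ha, ← hc] at *
        omega
      · obtain ⟨hxi, _, _⟩ := hmemC x hx
        obtain ⟨hyi, _, _⟩ := hmemC y hy
        rw [hφne x hxi hxj, hφne y hyi hyj]
  apply perm_eq_of_lt_iff
  intro s t
  rw [pattern_lt_iff, pattern_lt_iff, hcomp s, hcomp t]
  exact hvaliff _ (Finset.coe_mem _) _ (Finset.coe_mem _)

/-- Translate the breadth property to the integer setting and apply the core bound. -/
lemma bound_of_breadth {n k : ℕ} (σ : Equiv.Perm (Fin n)) (hk : 2 ≤ k) (hkn : k < n)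
    (hbreadth : ∀ i j : Fin n, i ≠ j → k + 2 ≤ dperm σ i j) :
    (Odd k → k ^ 2 + 4 * k + 3 ≤ 2 * n) ∧ (Even k → k ^ 2 + 4 * k + 2 ≤ 2 * n) := by
  classical
  set b : ℤ := (k : ℤ) + 2 with hb
  set v : ℤ → ℤ := fun z => if h : z.toNat < n then ((σ ⟨z.toNat, h⟩ : Fin n) : ℤ) else 0 with hv
  have hrange : ∀ x, 0 ≤ x → x < (n:ℤ) → 0 ≤ v x ∧ v x < n := by
    intro x h1 h2
    have hlt : x.toNat < n := by omega
    rw [hv]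
    simp only [dif_pos hlt]
    constructor
    · positivity
    · exact_mod_cast (σ ⟨x.toNat, hlt⟩).isLt
  have hinj : ∀ x y, 0 ≤ x → x < (n:ℤ) → 0 ≤ y → y < (n:ℤ) → v x = v y → x = y := by
    intro x y h1 h2 h3 h4 h5
    have hx : x.toNat < n := by omega
    have hy : y.toNat < n := by omega
    rw [hv] at h5
    simp only [dif_pos hx, dif_pos hy] at h5
    have h6 : (σ ⟨x.toNat, hx⟩ : Fin n) = σ ⟨y.toNat, hy⟩ := Fin.val_injective (by exact_mod_cast h5)
    have h7 := σ.injective h6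
    have h8 : x.toNat = y.toNat := by
      have := congrArg Fin.val h7
      simpa using this
    omega
  have hbr : ∀ x y, 0 ≤ x → x < (n:ℤ) → 0 ≤ y → y < (n:ℤ) → x ≠ y →
      b ≤ |x - y| + |v x - v y| := by
    intro x y h1 h2 h3 h4 h5
    have hx : x.toNat < n := by omega
    have hy : y.toNat < n := by omega
    have hne : (⟨x.toNat, hx⟩ : Fin n) ≠ ⟨y.toNat, hy⟩ := by
      intro hEq
      have := congrArg Fin.val hEq
      simp only at this
      omega
    have hbd := hbreadth _ _ hne
    unfold dperm at hbd
    have e1 : ((Nat.dist x.toNat y.toNat : ℕ) : ℤ) = |x - y| := by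
      rw [natdist_cast]
      congr 1
      omega
    have e2 : ((Nat.dist ((σ ⟨x.toNat, hx⟩ : Fin n) : ℕ) ((σ ⟨y.toNat, hy⟩ : Fin n) : ℕ) : ℕ) : ℤ)
        = |v x - v y| := by
      rw [natdist_cast]
      rw [hv]
      simp only [dif_pos hx, dif_pos hy]
    have e3 : (k : ℤ) + 2 ≤ ((Nat.dist x.toNat y.toNat : ℕ) : ℤ)
        + ((Nat.dist ((σ ⟨x.toNat, hx⟩ : Fin n) : ℕ) ((σ ⟨y.toNat, hy⟩ : Fin n) : ℕ) : ℕ) : ℤ) := by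
      exact_mod_cast hbd
    rw [hb]
    omega
  have hn2 : (2:ℤ) ≤ n := by
    have : 2 ≤ n := by omega
    exact_mod_cast this
  rcases Nat.even_or_odd k with he | ho
  · -- k even, k = 2a, a ≥ 1
    obtain ⟨a, ha⟩ := he
    have ha1 : 1 ≤ a := by omega
    have hka : (k:ℤ) = 2 * (a:ℤ) := by push_cast [ha]; ring
    have hconcl := core_bound (T := (a:ℤ)) (U := b - 1 - (a:ℤ)) v
      (by omega) (by omega) (by omega) (by omega) rfl hn2 hrange hinj hbr
    have hgoal : k ^ 2 + 4 * k + 2 ≤ 2 * n := by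
      zify
      nlinarith [hconcl]
    refine ⟨fun hodd' => ?_, fun _ => hgoal⟩
    exfalso
    obtain ⟨c, hcc⟩ := hodd'
    omega
  · -- k odd, k = 2a+1, a ≥ 1
    obtain ⟨a, ha⟩ := ho
    have ha1 : 1 ≤ a := by omega
    have hka : (k:ℤ) = 2 * (a:ℤ) + 1 := by push_cast [ha]; ring
    have hconcl := core_bound (T := (a:ℤ) + 1) (U := b - 1 - ((a:ℤ) + 1)) v
      (by omega) (by omega) (by omega) (fun _ => by omega) rfl hn2 hrange hinj hbr
    have hgoal : k ^ 2 + 4 * k + 3 ≤ 2 * n := by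
      zify
      nlinarith [hconcl]
    refine ⟨fun _ => hgoal, fun heven => ?_⟩
    exfalso
    obtain ⟨c, hcc⟩ := heven
    omega

/-- The special case `k = 1` : a permutation with breadth at least 3 has size at least 4. -/
lemma k_one_case {n : ℕ} (σ : Equiv.Perm (Fin n)) (h2 : 2 ≤ n)
    (hbreadth : ∀ i j : Fin n, i ≠ j → 3 ≤ dperm σ i j) : 4 ≤ n := by
  by_contra hc
  push_neg at hc
  interval_cases n
  · -- n = 2
    have h01 := hbreadth ⟨0, by omega⟩ ⟨1, by omega⟩ (by
      intro h; have := congrArg Fin.val h; simpa using this)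
    unfold dperm at h01
    have d1 : Nat.dist 0 1 = 1 := rfl
    have hv0 := (σ ⟨0, by omega⟩).isLt
    have hv1 := (σ ⟨1, by omega⟩).isLt
    have hd : Nat.dist ((σ ⟨0, by omega⟩ : Fin 2) : ℕ) ((σ ⟨1, by omega⟩ : Fin 2) : ℕ)
        = ((σ ⟨0, by omega⟩ : Fin 2) : ℕ) - ((σ ⟨1, by omega⟩ : Fin 2) : ℕ)
          + (((σ ⟨1, by omega⟩ : Fin 2) : ℕ) - ((σ ⟨0, by omega⟩ : Fin 2) : ℕ)) := rfl
    simp only [Fin.val_zero, Fin.val_one] at h01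
    omega
  · -- n = 3
    have mk0 : (⟨0, by omega⟩ : Fin 3) ≠ ⟨1, by omega⟩ := by
      intro h; have := congrArg Fin.val h; simpa using this
    have mk1 : (⟨1, by omega⟩ : Fin 3) ≠ ⟨2, by omega⟩ := by
      intro h; have := congrArg Fin.val h; simpa using this
    have mk2 : (⟨0, by omega⟩ : Fin 3) ≠ ⟨2, by omega⟩ := by
      intro h; have := congrArg Fin.val h; simpa using this
    have h01 := hbreadth _ _ mk0
    have h12 := hbreadth _ _ mk1
    have h02 := hbreadth _ _ mk2
    unfold dperm at h01 h12 h02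
    set v0 := ((σ ⟨0, by omega⟩ : Fin 3) : ℕ) with hv0'
    set v1 := ((σ ⟨1, by omega⟩ : Fin 3) : ℕ) with hv1'
    set v2 := ((σ ⟨2, by omega⟩ : Fin 3) : ℕ) with hv2'
    have hv0 : v0 < 3 := (σ _).isLt
    have hv1 : v1 < 3 := (σ _).isLt
    have hv2 : v2 < 3 := (σ _).isLt
    have hne02 : v0 ≠ v2 := by
      intro h
      exact mk2 (σ.injective (Fin.val_injective h))
    have d01 : Nat.dist (0:ℕ) 1 = 1 := rfl
    have d12 : Nat.dist (1:ℕ) 2 = 1 := rfl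
    have e01 : Nat.dist v0 v1 = (v0 - v1) + (v1 - v0) := rfl
    have e12 : Nat.dist v1 v2 = (v1 - v2) + (v2 - v1) := rfl
    simp only [Fin.val_zero, Fin.val_one] at h01 h12
    have hd01 : Nat.dist (0:ℕ) 1 = 1 := rfl
    omega

/-- Lower bound on the size of a `k`-prolific permutation:
`n ≥ ⌈k²/2 + 2k + 1⌉`, i.e. `2n ≥ k² + 4k + 3` for odd `k` and
`2n ≥ k² + 4k + 2` for even `k`. -/
theorem minprol_lower_bound {n k : ℕ} (hk : 1 ≤ k) (hkn : k < n)
    (hex : ∃ σ : Equiv.Perm (Fin n), IsProlific k σ) :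
    (k ^ 2 + 4 * k + 3) / 2 ≤ n ∧
    (Odd k → k ^ 2 + 4 * k + 3 ≤ 2 * n) ∧
    (Even k → k ^ 2 + 4 * k + 2 ≤ 2 * n) := by
  classical
  obtain ⟨σ, hp⟩ := hex
  have hbreadth : ∀ i j : Fin n, i ≠ j → k + 2 ≤ dperm σ i j := by
    intro i j hne
    by_contra hcb
    push_neg at hcb
    have hc' : dperm σ i j ≤ k + 1 := by omega
    have hvne : (i:ℕ) ≠ (j:ℕ) := fun h => hne (Fin.val_injective h)
    rcases Nat.lt_or_ge (i:ℕ) (j:ℕ) with h | h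
    · exact not_prolific_of_close σ hk hkn i j h hc' hp
    · have h' : (j:ℕ) < (i:ℕ) := by omega
      have hcomm : dperm σ j i ≤ k + 1 := by
        unfold dperm at hc' ⊢
        rw [Nat.dist_comm ((j:ℕ)) ((i:ℕ)), Nat.dist_comm (((σ j : Fin n)):ℕ) (((σ i : Fin n)):ℕ)]
        exact hc'
      exact not_prolific_of_close σ hk hkn j i h' hcomm hp
  rcases Nat.lt_or_ge k 2 with hk1 | hk2
  · -- k = 1
    have hk1' : k = 1 := by omega
    subst hk1'
    have hbr3 : ∀ i j : Fin n, i ≠ j → 3 ≤ dperm σ i j := by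
      intro i j hne
      have := hbreadth i j hne
      omega
    have h4 := k_one_case σ (by omega) hbr3
    refine ⟨by norm_num; omega, fun _ => by norm_num; omega, fun he => ?_⟩
    exfalso
    obtain ⟨c, hcc⟩ := he
    omega
  · -- k ≥ 2
    have hnum := bound_of_breadth σ hk2 hkn hbreadth
    refine ⟨?_, hnum.1, hnum.2⟩
    rcases Nat.even_or_odd k with he | ho
    · have h2 := hnum.2 he
      set K := k ^ 2 with hK
      omega
    · have h2 := hnum.1 ho
      set K := k ^ 2 with hK
      omega

end Prolific
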